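/- If A ∈ ℝ^{m×m} is positive definite, then for every simplicial cone K = L(ℝ^m_+) (L invertible) and every q ∈ ℝ^m, the problem LCP(K, A, q) has a unique solution. -/

import Mathlib

open Matrix

/-- The dual cone of a set in `ℝ^m`. -/
def dualSet {m : ℕ} (W : Set (Fin m → ℝ)) : Set (Fin m → ℝ) :=
  {y | ∀ x ∈ W, 0 ≤ x ⬝ᵥ y}

open scoped RealInnerProductSpace

section Aux

variable {E : Type*} [NormedAddCommGroup E] [InnerProductSpace ℝ E] [CompleteSpace E]

theorem vi_exists_unique_aux (K : Set E) (hconv : Convex ℝ K) (hcl : IsClosed K)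
    (hne : K.Nonempty) (T : E →L[ℝ] E) {α : ℝ} (hα : 0 < α)
    (hmono : ∀ u : E, α * ‖u‖ ^ 2 ≤ ⟪T u, u⟫) (q : E) :
    ∃! x : E, x ∈ K ∧ ∀ y ∈ K, 0 ≤ ⟪T x + q, y - x⟫ := by
  have hproj : ∀ u : E, ∃ v, v ∈ K ∧ ∀ w ∈ K, ⟪u - v, w - v⟫ ≤ 0 := by
    intro u
    obtain ⟨v, hv, hmin⟩ := exists_norm_eq_iInf_of_complete_convex hne hcl.isComplete hconv u
    exact ⟨v, hv, (norm_eq_iInf_iff_real_inner_le_zero hconv hv).1 hmin⟩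
  choose p hpK hp using hproj
  have hnonexp : ∀ a b : E, ‖p a - p b‖ ≤ ‖a - b‖ := by
    intro a b
    have h1 := hp a (p b) (hpK b)
    have h2 := hp b (p a) (hpK a)
    have key : ‖p a - p b‖ ^ 2 ≤ ⟪a - b, p a - p b⟫ := by
      have expand : ⟪a - b, p a - p b⟫ - ‖p a - p b‖ ^ 2
          = -⟪a - p a, p b - p a⟫ - ⟪b - p b, p a - p b⟫ := by
        rw [← real_inner_self_eq_norm_sq]
        simp only [inner_sub_left, inner_sub_right]
        ring
      nlinarith [expand]
    have hle : ⟪a - b, p a - p b⟫ ≤ ‖a - b‖ * ‖p a - p b‖ := real_inner_le_norm _ _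
    nlinarith [norm_nonneg (p a - p b), norm_nonneg (a - b), sq_nonneg (‖a - b‖ - ‖p a - p b‖)]
  -- constants
  set C : ℝ := max ‖T‖ α with hCdef
  have hC0 : 0 < C := lt_of_lt_of_le hα (le_max_right _ _)
  have hαC : α ≤ C := le_max_right _ _
  have hTC : ∀ u : E, ‖T u‖ ≤ C * ‖u‖ := fun u =>
    le_trans (T.le_opNorm u) (mul_le_mul_of_nonneg_right (le_max_left _ _) (norm_nonneg u))
  set c : ℝ := α / C ^ 2 with hcdef
  have hc0 : 0 < c := div_pos hα (by positivity)
  set f : E → E := fun u => p (u - c • (T u + q)) with hfdef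
  set k : ℝ := Real.sqrt (1 - α ^ 2 / C ^ 2) with hkdef
  have harg0 : 0 ≤ 1 - α ^ 2 / C ^ 2 := by
    rw [sub_nonneg, div_le_one (by positivity)]
    nlinarith
  have hk0 : 0 ≤ k := Real.sqrt_nonneg _
  have hksq : k ^ 2 = 1 - α ^ 2 / C ^ 2 := Real.sq_sqrt harg0
  have hk1 : k < 1 := by
    have h2 : 0 < α ^ 2 / C ^ 2 := by positivity
    nlinarith
  have hcontr : ∀ u v : E, ‖f u - f v‖ ≤ k * ‖u - v‖ := by
    intro u v
    have step1 : ‖f u - f v‖ ≤ ‖(u - v) - c • T (u - v)‖ := by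
      have := hnonexp (u - c • (T u + q)) (v - c • (T v + q))
      have heq : (u - c • (T u + q)) - (v - c • (T v + q)) = (u - v) - c • T (u - v) := by
        rw [map_sub]; module
      rwa [heq] at this
    set w : E := u - v with hw
    have expand : ‖w - c • T w‖ ^ 2
        = ‖w‖ ^ 2 - 2 * c * ⟪T w, w⟫ + c ^ 2 * ‖T w‖ ^ 2 := by
      rw [norm_sub_sq_real, norm_smul, real_inner_smul_right, real_inner_comm]
      simp [mul_pow, abs_of_pos hc0]
      ring
    have hb1 : α * ‖w‖ ^ 2 ≤ ⟪T w, w⟫ := hmono w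
    have hb2 : ‖T w‖ ^ 2 ≤ C ^ 2 * ‖w‖ ^ 2 := by
      have := hTC w
      nlinarith [norm_nonneg (T w), norm_nonneg w]
    have sqle : ‖w - c • T w‖ ^ 2 ≤ k ^ 2 * ‖w‖ ^ 2 := by
      rw [expand, hksq]
      have hcval : c = α / C ^ 2 := hcdef
      have hC2 : (0:ℝ) < C ^ 2 := by positivity
      rw [hcval]
      have e1 : 2 * (α / C ^ 2) * ⟪T w, w⟫ ≥ 2 * (α / C ^ 2) * (α * ‖w‖ ^ 2) := by
        apply mul_le_mul_of_nonneg_left hb1 (by positivity)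
      have e2 : (α / C ^ 2) ^ 2 * ‖T w‖ ^ 2 ≤ (α / C ^ 2) ^ 2 * (C ^ 2 * ‖w‖ ^ 2) := by
        apply mul_le_mul_of_nonneg_left hb2 (by positivity)
      have key : (α / C ^ 2) ^ 2 * (C ^ 2 * ‖w‖ ^ 2) - 2 * (α / C ^ 2) * (α * ‖w‖ ^ 2)
          = -(α ^ 2 / C ^ 2) * ‖w‖ ^ 2 := by
        field_simp
        ring
      nlinarith
    calc ‖f u - f v‖ ≤ ‖w - c • T w‖ := step1
      _ = Real.sqrt (‖w - c • T w‖ ^ 2) := by rw [Real.sqrt_sq (norm_nonneg _)]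
      _ ≤ Real.sqrt (k ^ 2 * ‖w‖ ^ 2) := Real.sqrt_le_sqrt sqle
      _ = k * ‖w‖ := by
          rw [Real.sqrt_mul (sq_nonneg _), Real.sqrt_sq hk0, Real.sqrt_sq (norm_nonneg _)]
  -- Banach fixed point
  haveI : Nonempty E := ⟨hne.some⟩
  have hlip : LipschitzWith k.toNNReal f := by
    apply LipschitzWith.of_dist_le_mul
    intro x y
    rw [dist_eq_norm, dist_eq_norm, Real.coe_toNNReal _ hk0]
    exact hcontr x y
  have hcw : ContractingWith k.toNNReal f := by
    constructor
    · rwa [← NNReal.coe_lt_coe, Real.coe_toNNReal _ hk0, NNReal.coe_one]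
    · exact hlip
  obtain ⟨x, hfx⟩ : ∃ x : E, f x = x :=
    ⟨ContractingWith.fixedPoint f hcw, hcw.fixedPoint_isFixedPt⟩
  have hxK : x ∈ K := by rw [← hfx]; exact hpK _
  have hVI : ∀ y ∈ K, 0 ≤ ⟪T x + q, y - x⟫ := by
    intro y hy
    have hfx' : p (x - c • (T x + q)) = x := hfx
    have := hp (x - c • (T x + q)) y hy
    rw [hfx'] at this
    have heq : (x - c • (T x + q)) - x = -(c • (T x + q)) := by abel
    rw [heq] at this
    rw [inner_neg_left, real_inner_smul_left] at this
    nlinarith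
  refine ⟨x, ⟨hxK, hVI⟩, ?_⟩
  rintro y ⟨hyK, hyVI⟩
  have h1 := hyVI x hxK
  have h2 := hVI y hyK
  have hsum : 0 ≤ ⟪T y - T x, x - y⟫ := by
    have : ⟪T y + q, x - y⟫ + ⟪T x + q, y - x⟫ = ⟪T y - T x, x - y⟫ := by
      simp only [inner_add_left, inner_sub_left, inner_sub_right]
      ring
    linarith
  have hmono' := hmono (y - x)
  have hTsub : T (y - x) = T y - T x := map_sub T y x
  have : ⟪T y - T x, x - y⟫ = -⟪T (y - x), y - x⟫ := by
    rw [hTsub, ← inner_neg_right]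
    congr 1
    abel
  have h4 : α * ‖y - x‖ ^ 2 ≤ 0 := by linarith
  have hle0 : ‖y - x‖ ^ 2 ≤ 0 := nonpos_of_mul_nonpos_right (by linarith [mul_comm α (‖y - x‖ ^ 2)]) hα
  have hnorm0 : ‖y - x‖ = 0 := by
    have h5 := sq_nonneg ‖y - x‖
    have h6 : ‖y - x‖ ^ 2 = 0 := le_antisymm hle0 h5
    exact pow_eq_zero_iff (by norm_num) |>.mp h6
  exact sub_eq_zero.mp (norm_eq_zero.mp hnorm0)

end Aux

noncomputable def toE {m : ℕ} (A : Matrix (Fin m) (Fin m) ℝ) :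
    EuclideanSpace ℝ (Fin m) →L[ℝ] EuclideanSpace ℝ (Fin m) :=
  LinearMap.toContinuousLinearMap
    ((WithLp.linearEquiv 2 ℝ (Fin m → ℝ)).symm.toLinearMap ∘ₗ A.mulVecLin ∘ₗ
      (WithLp.linearEquiv 2 ℝ (Fin m → ℝ)).toLinearMap)

theorem innerE {m : ℕ} (x y : EuclideanSpace ℝ (Fin m)) : ⟪x, y⟫ = dotProduct x y := by
  simp [PiLp.inner_apply, RCLike.inner_apply, dotProduct, conj_trivial]
  exact Finset.sum_congr rfl fun _ _ => mul_comm _ _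

/-- If `A` is positive definite, then for every simplicial cone `K = L(ℝ^m_+)` and every
`q`, the problem `LCP(K, A, q)` has a unique solution. -/
theorem stmt18 {m : ℕ} (A : Matrix (Fin m) (Fin m) ℝ)
    (hpd : ∀ x : Fin m → ℝ, x ≠ 0 → 0 < (A.mulVec x) ⬝ᵥ x)
    (L : Matrix (Fin m) (Fin m) ℝ) (hL : IsUnit L) (q : Fin m → ℝ) :
    ∃! x : Fin m → ℝ, x ∈ L.mulVec '' {v : Fin m → ℝ | ∀ i, 0 ≤ v i} ∧
      A.mulVec x + q ∈ dualSet (L.mulVec '' {v : Fin m → ℝ | ∀ i, 0 ≤ v i}) ∧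
      x ⬝ᵥ (A.mulVec x + q) = 0 := by
  set O : Set (Fin m → ℝ) := {v : Fin m → ℝ | ∀ i, 0 ≤ v i} with hO
  set S : Set (EuclideanSpace ℝ (Fin m)) := (fun v => WithLp.toLp 2 (L.mulVec v)) '' O with hS
  -- convexity
  have hconv : Convex ℝ S := by
    rintro _ ⟨v, hv, rfl⟩ _ ⟨w, hw, rfl⟩ a b ha hb hab
    refine ⟨a • v + b • w, fun i => add_nonneg (mul_nonneg ha (hv i)) (mul_nonneg hb (hw i)), ?_⟩
    show WithLp.toLp 2 (L.mulVec (a • v + b • w)) = a • WithLp.toLp 2 (L.mulVec v) + b • WithLp.toLp 2 (L.mulVec w)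
    rw [mulVec_add, mulVec_smul, mulVec_smul, WithLp.toLp_add, WithLp.toLp_smul, WithLp.toLp_smul]
  -- inverse matrix
  obtain ⟨B, hLB, hBL⟩ : ∃ B : Matrix (Fin m) (Fin m) ℝ, L * B = 1 ∧ B * L = 1 :=
    ⟨L⁻¹, mul_nonsing_inv _ ((Matrix.isUnit_iff_isUnit_det L).mp hL),
      nonsing_inv_mul _ ((Matrix.isUnit_iff_isUnit_det L).mp hL)⟩
  -- closedness
  have hScl : IsClosed S := by
    have hSeq : S = (fun x : EuclideanSpace ℝ (Fin m) => toE B x) ⁻¹'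
        {x : EuclideanSpace ℝ (Fin m) | ∀ i, 0 ≤ x i} := by
      ext x
      constructor
      · rintro ⟨v, hv, rfl⟩
        show ∀ i, 0 ≤ B.mulVec (L.mulVec v) i
        rw [mulVec_mulVec, hBL, one_mulVec]
        exact hv
      · intro hx
        refine ⟨B.mulVec x.ofLp, hx, ?_⟩
        show WithLp.toLp 2 (L.mulVec (B.mulVec x.ofLp)) = x
        rw [mulVec_mulVec, hLB, one_mulVec]
    rw [hSeq]
    apply IsClosed.preimage (toE B).continuous
    have : {x : EuclideanSpace ℝ (Fin m) | ∀ i, 0 ≤ x i}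
        = ⋂ i, {x : EuclideanSpace ℝ (Fin m) | 0 ≤ x i} := by
      ext x; simp [Set.mem_iInter]
    rw [this]
    refine isClosed_iInter fun i => isClosed_le continuous_const ?_
    exact (continuous_apply i).comp (PiLp.continuous_ofLp 2 (fun _ : Fin m => ℝ))
  -- nonempty
  have h0S : (0 : EuclideanSpace ℝ (Fin m)) ∈ S := ⟨0, fun i => le_refl 0, by simp⟩
  have hne : S.Nonempty := ⟨0, h0S⟩
  -- strong monotonicity constant
  obtain ⟨α, hα, hmono⟩ : ∃ α : ℝ, 0 < α ∧
      ∀ u : EuclideanSpace ℝ (Fin m), α * ‖u‖ ^ 2 ≤ ⟪toE A u, u⟫ := by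
    rcases Nat.eq_zero_or_pos m with hm | hm
    · refine ⟨1, one_pos, fun u => ?_⟩
      subst hm
      have hu : u = 0 := by ext i; exact i.elim0
      subst hu
      simp
    · set sph := Metric.sphere (0 : EuclideanSpace ℝ (Fin m)) 1 with hsph
      have hne' : sph.Nonempty := by
        refine ⟨EuclideanSpace.single ⟨0, hm⟩ (1 : ℝ), ?_⟩
        simp [hsph, EuclideanSpace.norm_single]
      have hcont : Continuous fun u : EuclideanSpace ℝ (Fin m) => ⟪toE A u, u⟫ :=
        (toE A).continuous.inner continuous_id
      obtain ⟨u₀, hu₀, hmin⟩ := (isCompact_sphere (0 : EuclideanSpace ℝ (Fin m)) 1).exists_isMinOn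
        hne' hcont.continuousOn
      have hu₀norm : ‖u₀‖ = 1 := by simpa using hu₀
      have hu₀ne : u₀ ≠ 0 := by
        intro h; rw [h, norm_zero] at hu₀norm; norm_num at hu₀norm
      refine ⟨⟪toE A u₀, u₀⟫, ?_, ?_⟩
      · rw [innerE]
        exact hpd u₀.ofLp (fun h => hu₀ne ((WithLp.ofLp_injective 2) (by rw [h]; rfl)))
      · intro u
        by_cases hu : u = 0
        · subst hu; simp
        · have hr : 0 < ‖u‖ := norm_pos_iff.mpr hu
          set v : EuclideanSpace ℝ (Fin m) := ‖u‖⁻¹ • u with hv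
          have hvs : v ∈ sph := by
            simp [hsph, hv, norm_smul, abs_of_pos (inv_pos.mpr hr), inv_mul_cancel₀ hr.ne']
          have hmin' : ⟪toE A u₀, u₀⟫ ≤ ⟪toE A v, v⟫ := hmin hvs
          have huv : u = ‖u‖ • v := by
            rw [hv, smul_smul, mul_inv_cancel₀ hr.ne', one_smul]
          have hsc : ∀ (r : ℝ) (w : EuclideanSpace ℝ (Fin m)),
              ⟪toE A (r • w), r • w⟫ = r ^ 2 * ⟪toE A w, w⟫ := by
            intro r w
            rw [_root_.map_smul, real_inner_smul_left, real_inner_smul_right]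
            ring
          have hexp : ⟪toE A u, u⟫ = ‖u‖ ^ 2 * ⟪toE A v, v⟫ := by
            conv_lhs => rw [huv]
            rw [hsc]
          rw [hexp]
          nlinarith [sq_nonneg ‖u‖]
  -- apply the VI theorem
  obtain ⟨x, ⟨hxS, hxVI⟩, huniq⟩ := vi_exists_unique_aux S hconv hScl hne (toE A) hα hmono
    (WithLp.toLp 2 q)
  -- cone facts
  have h2S : ∀ y : EuclideanSpace ℝ (Fin m), y ∈ S → (2 : ℝ) • y ∈ S := by
    rintro _ ⟨v, hv, rfl⟩
    refine ⟨(2 : ℝ) • v, fun i => ?_, ?_⟩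
    · show (0:ℝ) ≤ ((2:ℝ) • v) i
      simp only [Pi.smul_apply, smul_eq_mul]
      exact mul_nonneg (by norm_num) (hv i)
    show WithLp.toLp 2 (L.mulVec ((2:ℝ) • v)) = (2:ℝ) • WithLp.toLp 2 (L.mulVec v)
    rw [mulVec_smul, WithLp.toLp_smul]
  set z : Fin m → ℝ := A.mulVec x.ofLp + q with hz
  have hdot : ∀ y : EuclideanSpace ℝ (Fin m),
      ⟪toE A x + WithLp.toLp 2 q, y - x⟫ = z ⬝ᵥ (y.ofLp - x.ofLp) := by
    intro y
    rw [innerE]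
    rfl
  have h1 := hxVI 0 h0S
  have h2 := hxVI ((2:ℝ) • x) (h2S x hxS)
  rw [hdot] at h1 h2
  have e1 : z ⬝ᵥ ((0 : EuclideanSpace ℝ (Fin m)).ofLp - x.ofLp) = -(z ⬝ᵥ x.ofLp) := by
    rw [show (0 : EuclideanSpace ℝ (Fin m)).ofLp = 0 from rfl, zero_sub, dotProduct_neg]
  have e2 : z ⬝ᵥ (((2:ℝ) • x).ofLp - x.ofLp) = z ⬝ᵥ x.ofLp := by
    congr 1
    show (2:ℝ) • x.ofLp - x.ofLp = x.ofLp
    rw [two_smul]; abel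
  rw [e1] at h1
  rw [e2] at h2
  have hzx : z ⬝ᵥ x.ofLp = 0 := le_antisymm (by linarith) h2
  refine ⟨x.ofLp, ⟨?_, ?_, ?_⟩, ?_⟩
  · obtain ⟨v, hv, hvx⟩ := hxS
    exact ⟨v, hv, by rw [← hvx]⟩
  · -- dual cone membership
    intro w hwS
    have := hxVI (WithLp.toLp 2 w) (by obtain ⟨v, hv, rfl⟩ := hwS; exact ⟨v, hv, rfl⟩)
    rw [hdot] at this
    rw [dotProduct_sub, hzx, sub_zero] at this
    rw [dotProduct_comm]
    exact this
  · rw [dotProduct_comm]; exact hzx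
  · -- uniqueness
    rintro y ⟨hyS, hydual, hycomp⟩
    have hyx : WithLp.toLp 2 y = x := by
      apply huniq
      refine ⟨by obtain ⟨v, hv, hvy⟩ := hyS; exact ⟨v, hv, by rw [← hvy]⟩, ?_⟩
      intro w hwS
      rw [innerE]
      show 0 ≤ (A.mulVec y + q) ⬝ᵥ (w.ofLp - y)
      rw [dotProduct_sub]
      have hw := hydual w.ofLp (by obtain ⟨v, hv, rfl⟩ := hwS; exact ⟨v, hv, rfl⟩)
      rw [dotProduct_comm] at hw
      have hy : (A.mulVec y + q) ⬝ᵥ y = 0 := by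
        rw [dotProduct_comm]; exact hycomp
      linarith
    rw [← hyx]
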